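/- Let B¹, …, Bⁿ ⊆ H be the limiting candidate bases of the constraints consensus algorithm on a jointly strongly connected digraph, and suppose that for every edge (i,j) of the limit graph, φ(B^i ∪ B^j) = φ(B^j) = φ̄ for a common value φ̄. Then φ̄ = φ(B¹ ∪ ⋯ ∪ Bⁿ). -/

import Mathlib

section Aux

variable {α : Type*} [DecidableEq α] {Φ : Type*} [LinearOrder Φ] [OrderBot Φ]
  (φ : Finset α → Φ)

/-- If adding a set strictly increases the value, some single element does. -/
lemma aux_exists_elem
    (hmono : ∀ F G : Finset α, F ⊆ G → φ F ≤ φ G)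
    (hloc : ∀ F G : Finset α, F ⊆ G → ⊥ < φ F → φ F = φ G →
      ∀ h : α, φ G < φ (insert h G) → φ F < φ (insert h F)) :
    ∀ (G F : Finset α), ⊥ < φ F → φ F < φ (F ∪ G) →
      ∃ g ∈ G, φ F < φ (insert g F) := by
  intro G
  induction G using Finset.induction_on with
  | empty => intro F _ h; simp at h
  | insert _ _ hg ih =>
    rename_i g G'
    intro F hbot h
    by_cases h' : φ F < φ (F ∪ G')
    · obtain ⟨x, hx, hx'⟩ := ih F hbot h'
      exact ⟨x, Finset.mem_insert_of_mem hx, hx'⟩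
    · have heq : φ F = φ (F ∪ G') :=
        le_antisymm (hmono _ _ Finset.subset_union_left) (not_lt.mp h')
      have hins : φ (F ∪ G') < φ (insert g (F ∪ G')) := by
        have : F ∪ insert g G' = insert g (F ∪ G') := by
          ext x; simp [Finset.mem_insert, Finset.mem_union, or_assoc, or_comm, or_left_comm]
        rw [this] at h; rw [← heq]; exact h
      exact ⟨g, Finset.mem_insert_self _ _,
        hloc F (F ∪ G') Finset.subset_union_left hbot heq g hins⟩

/-- Combination lemma: two extensions preserving the value combine. -/
lemma aux_combine
    (hmono : ∀ F G : Finset α, F ⊆ G → φ F ≤ φ G)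
    (hloc : ∀ F G : Finset α, F ⊆ G → ⊥ < φ F → φ F = φ G →
      ∀ h : α, φ G < φ (insert h G) → φ F < φ (insert h F))
    (F G G' : Finset α) (hbot : ⊥ < φ F)
    (h1 : φ (F ∪ G) = φ F) (h2 : φ (F ∪ G') = φ F) :
    φ (F ∪ G ∪ G') = φ F := by
  by_contra hne
  have hlt : φ (F ∪ G) < φ ((F ∪ G) ∪ G') := by
    rcases lt_or_eq_of_le (hmono (F ∪ G) (F ∪ G ∪ G') Finset.subset_union_left) with h | h
    · exact h
    · exact absurd (h ▸ h1) hne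
  have hbot' : ⊥ < φ (F ∪ G) := h1 ▸ hbot
  obtain ⟨g, hg, hg'⟩ := aux_exists_elem φ hmono hloc G' (F ∪ G) hbot' hlt
  have := hloc F (F ∪ G) Finset.subset_union_left hbot h1.symm g hg'
  have hsub : insert g F ⊆ F ∪ G' := by
    intro x hx
    rcases Finset.mem_insert.mp hx with rfl | hx
    · exact Finset.mem_union_right _ hg
    · exact Finset.mem_union_left _ hx
  have := lt_of_lt_of_le this (hmono _ _ hsub)
  rw [h2] at this
  exact lt_irrefl _ this

end Aux

/-- If subsets `B¹, …, Bⁿ ⊆ H` indexed by the nodes of a weakly connected graph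
all have common finite value `φ̄`, and `φ(B^i ∪ B^j) = φ̄` for every edge `(i,j)`,
then the union of all the sets also has value `φ̄`. -/
theorem value_of_union_of_limit_bases
    {α : Type*} [DecidableEq α] {Φ : Type*} [LinearOrder Φ] [OrderBot Φ]
    (φ : Finset α → Φ)
    (hmono : ∀ F G : Finset α, F ⊆ G → φ F ≤ φ G)
    (hloc : ∀ F G : Finset α, F ⊆ G → ⊥ < φ F → φ F = φ G →
      ∀ h : α, φ G < φ (insert h G) → φ F < φ (insert h F))
    (n : ℕ) (hn : 0 < n)
    (adj : Fin n → Fin n → Prop)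
    -- weak connectivity: any node reaches any other through undirected edges
    (hconn : ∀ i j : Fin n, Relation.ReflTransGen (fun a b => adj a b ∨ adj b a) i j)
    (B : Fin n → Finset α) (φbar : Φ) (hfin : ⊥ < φbar)
    (hval : ∀ i, φ (B i) = φbar)
    (hedge : ∀ i j, adj i j → φ (B i ∪ B j) = φbar) :
    φ (Finset.univ.biUnion B) = φbar := by
  set i0 : Fin n := ⟨0, hn⟩
  -- pairwise with the root
  have hpair : ∀ j, φ (B i0 ∪ B j) = φbar := by
    intro j
    induction hconn i0 j with
    | refl => rw [Finset.union_self]; exact hval i0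
    | @tail a b hab hedge' ih =>
      have hea : φ (B a ∪ B b) = φbar := by
        rcases hedge' with h | h
        · exact hedge a b h
        · rw [Finset.union_comm]; exact hedge b a h
      have hbota : ⊥ < φ (B a) := (hval a) ▸ hfin
      have h1 : φ (B a ∪ B i0) = φ (B a) := by
        rw [Finset.union_comm]; rw [ih, hval a]
      have h2 : φ (B a ∪ B b) = φ (B a) := by rw [hea, hval a]
      have hc := aux_combine φ hmono hloc (B a) (B i0) (B b) hbota h1 h2
      have hsub : B i0 ∪ B b ⊆ B a ∪ B i0 ∪ B b := by
        intro x hx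
        rcases Finset.mem_union.mp hx with hx | hx
        · exact Finset.mem_union_left _ (Finset.mem_union_right _ hx)
        · exact Finset.mem_union_right _ hx
      refine le_antisymm ?_ ?_
      · calc φ (B i0 ∪ B b) ≤ φ (B a ∪ B i0 ∪ B b) := hmono _ _ hsub
          _ = φbar := by rw [hc, hval a]
      · rw [← hval i0]; exact hmono _ _ Finset.subset_union_left
  -- now build up the full union
  have hbot0 : ⊥ < φ (B i0) := (hval i0) ▸ hfin
  have hall : ∀ s : Finset (Fin n), φ (B i0 ∪ s.biUnion B) = φbar := by
    intro s
    induction s using Finset.induction_on with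
    | empty => simp [hval i0]
    | insert _ _ hj ihs =>
      rename_i j s'
      have h1 : φ (B i0 ∪ s'.biUnion B) = φ (B i0) := by rw [ihs, hval i0]
      have h2 : φ (B i0 ∪ B j) = φ (B i0) := by rw [hpair j, hval i0]
      have hc := aux_combine φ hmono hloc (B i0) (s'.biUnion B) (B j) hbot0 h1 h2
      have : (insert j s').biUnion B = s'.biUnion B ∪ B j := by
        ext x; simp [Finset.mem_biUnion, Finset.mem_union, or_comm]
      rw [this, ← Finset.union_assoc, hc, hval i0]
  have := hall Finset.univ
  refine le_antisymm ?_ ?_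
  · rw [← this]; exact hmono _ _ Finset.subset_union_right
  · rw [← hval i0]
    exact hmono _ _ (fun x hx => Finset.mem_biUnion.mpr ⟨i0, Finset.mem_univ _, hx⟩)
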